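/- Let A_0, …, A_k ⊆ ℤ^n be full-dimensional configurations such that conv(A_0 + … + A_k) has an interior lattice point, and suppose there exists a lattice projection ρ : ℤ^{n+k} → ℤ^r mapping the Cayley sum A_0 * … * A_k onto Δ_r. Then k ≥ r. -/

import Mathlib

open scoped Pointwise

/-- The lattice `ℤ^n`. -/
abbrev ZLat (n : ℕ) := Fin n → ℤ

/-- Inclusion of `ℤ^n` into `ℝ^n`. -/
def toR {n : ℕ} (v : ZLat n) : Fin n → ℝ := fun i => (v i : ℝ)

/-- The dimension of a configuration: the dimension of its affine hull in `ℝ^n`. -/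
noncomputable def confDim {n : ℕ} (A : Finset (ZLat n)) : ℕ :=
  Module.finrank ℝ (affineSpan ℝ (toR '' (A : Set (ZLat n)))).direction

/-- `cayleyE k i` is `e_i ∈ ℤ^k`, where `e_0 = 0` and `e_1, …, e_k` are the
standard basis vectors. -/
def cayleyE (k : ℕ) (i : Fin (k + 1)) : ZLat k :=
  fun j => if (j : ℕ) + 1 = (i : ℕ) then 1 else 0

/-- The Cayley sum `A_0 * ⋯ * A_k ⊆ ℤ^{n+k}` of configurations `A_0, …, A_k ⊆ ℤ^n`. -/
def cayley {n k : ℕ} (A : Fin (k + 1) → Finset (ZLat n)) : Finset (ZLat (n + k)) :=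
  Finset.univ.biUnion fun i => (A i).image fun a => Fin.append a (cayleyE k i)

/-- The vertex set `Δ_k = {e_0, e_1, …, e_k} ⊆ ℤ^k` of the standard unimodular simplex. -/
def stdSimplexConfig (k : ℕ) : Finset (ZLat k) := Finset.univ.image (cayleyE k)

/-- The subgroup `⟨A - A⟩ ⊆ ℤ^n` generated by all differences of elements of `A`. -/
def diffSpan {n : ℕ} (A : Finset (ZLat n)) : AddSubgroup (ZLat n) :=
  AddSubgroup.closure {d | ∃ a ∈ A, ∃ b ∈ A, d = a - b}

/-- A family `A_0, …, A_k ⊆ ℤ^n` is spanning if `⟨A_0-A_0⟩ + ⋯ + ⟨A_k-A_k⟩ = ℤ^n`. -/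
def IsSpanningFamily {n k : ℕ} (A : Fin (k + 1) → Finset (ZLat n)) : Prop :=
  (⨆ i, diffSpan (A i)) = ⊤

/-- The Cayley sum of `A_0, …, A_k` is of join type if the natural homomorphism
`⟨A_0-A_0⟩ ⊕ ⋯ ⊕ ⟨A_k-A_k⟩ → ℤ^n`, `(a_0, …, a_k) ↦ a_0 + ⋯ + a_k`, is injective. -/
def JoinType {n k : ℕ} (A : Fin (k + 1) → Finset (ZLat n)) : Prop :=
  ∀ d : Fin (k + 1) → ZLat n, (∀ i, d i ∈ diffSpan (A i)) → ∑ i, d i = 0 → ∀ i, d i = 0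

/-- The lattice points of the affine hull of `A`, i.e. `aff(A) ∩ ℤ^n`. -/
def affLat {n : ℕ} (A : Finset (ZLat n)) : Set (ZLat n) :=
  {x | toR x ∈ affineSpan ℝ (toR '' (A : Set (ZLat n)))}

/-- Two configurations `A ⊆ ℤ^n`, `B ⊆ ℤ^m` are isomorphic if there is an affine
lattice isomorphism `aff(A) ∩ ℤ^n → aff(B) ∩ ℤ^m` mapping `A` onto `B`. -/
def ConfigIso {n m : ℕ} (A : Finset (ZLat n)) (B : Finset (ZLat m)) : Prop :=
  ∃ f : ZLat n → ZLat m, ∃ g : ZLat m → ZLat n,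
    (∀ x ∈ affLat A, f x ∈ affLat B) ∧
    (∀ y ∈ affLat B, g y ∈ affLat A) ∧
    (∀ x ∈ affLat A, g (f x) = x) ∧
    (∀ y ∈ affLat B, f (g y) = y) ∧
    (∀ x y z, x ∈ affLat A → y ∈ affLat A → z ∈ affLat A →
      f (x + y - z) = f x + f y - f z) ∧
    f '' (A : Set (ZLat n)) = (B : Set (ZLat m))

/-- `F` is a face of the configuration `A`: the intersection of a face of the
polytope `conv(A)` with `A` (the empty face and `A` itself are allowed). -/
def IsFaceOf {n : ℕ} (F A : Finset (ZLat n)) : Prop :=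
  F = ∅ ∨ (F ⊆ A ∧ ∃ l : (Fin n → ℝ) →ₗ[ℝ] ℝ,
    (F : Set (ZLat n)) = {x ∈ (A : Set (ZLat n)) | ∀ y ∈ A, l (toR y) ≤ l (toR x)})

/-- Faces `F_0, …, F_k` of `A` covering `A` form a Cayley decomposition of `A` if
there is a lattice projection `π : ℤ^n → ℤ^k` with `π(F_i) ⊆ {e_i}` for all `i`. -/
def IsCayleyDecomp {n k : ℕ} (A : Finset (ZLat n)) (F : Fin (k + 1) → Finset (ZLat n)) : Prop :=
  (∀ i, IsFaceOf (F i) A) ∧ (∀ a ∈ A, ∃ i, a ∈ F i) ∧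
    ∃ π : ZLat n →+ ZLat k, Function.Surjective π ∧ ∀ i, ∀ x ∈ F i, π x = cayleyE k i

/-- `conv(A)` contains an interior lattice point. -/
def HasIntLatPt {n : ℕ} (A : Finset (ZLat n)) : Prop :=
  ∃ x : ZLat n, toR x ∈ interior (convexHull ℝ (toR '' (A : Set (ZLat n))))

/-- The dilate `c · conv(A)` contains an interior lattice point. -/
def HasIntLatPtDilate {n : ℕ} (c : ℕ) (A : Finset (ZLat n)) : Prop :=
  ∃ x : ZLat n, toR x ∈ interior ((c : ℝ) • convexHull ℝ (toR '' (A : Set (ZLat n))))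

/-- The codegree of the lattice polytope `conv(A)`: the smallest `c ≥ 1` such that
`c · conv(A)` has an interior lattice point. -/
noncomputable def codeg {n : ℕ} (A : Finset (ZLat n)) : ℕ :=
  sInf {c : ℕ | 1 ≤ c ∧ HasIntLatPtDilate c A}

/-! ### Auxiliary lemmas -/

section Aux

lemma toR_add' {n} (a b : ZLat n) : toR (a + b) = toR a + toR b := by
  funext j; simp [toR]

lemma toR_zero' {n} : toR (0 : ZLat n) = 0 := by funext j; simp [toR]

lemma toR_sum' {n} {ι : Type*} (s : Finset ι) (f : ι → ZLat n) :
    toR (∑ i ∈ s, f i) = ∑ i ∈ s, toR (f i) := by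
  funext j; simp [toR, Finset.sum_apply]

lemma toR_append' {n k} (a : ZLat n) (b : ZLat k) :
    toR (Fin.append a b) = Fin.append (toR a) (toR b) := by
  funext j
  refine Fin.addCases (fun m => ?_) (fun m => ?_) j <;>
    simp [toR, Fin.append_left, Fin.append_right]

section append
variable {n k : ℕ}

/-- `(v, 0) ∈ ℝ^{n+k}`. -/
def apL (v : Fin n → ℝ) : Fin (n + k) → ℝ := Fin.append v 0
/-- `(0, w) ∈ ℝ^{n+k}`. -/
def apR (w : Fin k → ℝ) : Fin (n + k) → ℝ := Fin.append 0 w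

lemma append_eq_apL_add_apR (v : Fin n → ℝ) (w : Fin k → ℝ) :
    Fin.append v w = apL v + apR w := by
  funext j
  refine Fin.addCases (fun m => ?_) (fun m => ?_) j <;>
    simp [apL, apR, Fin.append_left, Fin.append_right]

lemma apL_castAdd (v : Fin n → ℝ) (m : Fin n) : apL (k := k) v (Fin.castAdd k m) = v m :=
  Fin.append_left _ _ _
lemma apL_natAdd (v : Fin n → ℝ) (m : Fin k) : apL (k := k) v (Fin.natAdd n m) = 0 :=
  Fin.append_right _ _ _
lemma apR_castAdd (w : Fin k → ℝ) (m : Fin n) : apR (n := n) w (Fin.castAdd k m) = 0 :=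
  Fin.append_left _ _ _
lemma apR_natAdd (w : Fin k → ℝ) (m : Fin k) : apR (n := n) w (Fin.natAdd n m) = w m :=
  Fin.append_right _ _ _

lemma apL_add (v v' : Fin n → ℝ) : apL (k := k) (v + v') = apL v + apL v' := by
  funext j
  refine Fin.addCases (fun m => ?_) (fun m => ?_) j <;>
    simp [apL_castAdd, apL_natAdd]

lemma apL_smul (c : ℝ) (v : Fin n → ℝ) : apL (k := k) (c • v) = c • apL v := by
  funext j
  refine Fin.addCases (fun m => ?_) (fun m => ?_) j <;>
    simp [apL_castAdd, apL_natAdd]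

lemma apL_sub (v v' : Fin n → ℝ) : apL (k := k) (v - v') = apL v - apL v' := by
  funext j
  refine Fin.addCases (fun m => ?_) (fun m => ?_) j <;>
    simp [apL_castAdd, apL_natAdd]

lemma apL_finsum {ι : Type*} (s : Finset ι) (g : ι → (Fin n → ℝ)) :
    apL (k := k) (∑ i ∈ s, g i) = ∑ i ∈ s, apL (g i) := by
  funext j
  rw [Finset.sum_apply]
  refine Fin.addCases (fun m => ?_) (fun m => ?_) j <;>
    simp [apL_castAdd, apL_natAdd, Finset.sum_apply]

lemma apR_finsum {ι : Type*} (s : Finset ι) (g : ι → (Fin k → ℝ)) :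
    apR (n := n) (∑ i ∈ s, g i) = ∑ i ∈ s, apR (g i) := by
  funext j
  rw [Finset.sum_apply]
  refine Fin.addCases (fun m => ?_) (fun m => ?_) j <;>
    simp [apR_castAdd, apR_natAdd, Finset.sum_apply]

lemma apR_zero : apR (n := n) (0 : Fin k → ℝ) = 0 := by
  funext j
  refine Fin.addCases (fun m => ?_) (fun m => ?_) j <;>
    simp [apR_castAdd, apR_natAdd]

lemma split_eq (w : Fin (n + k) → ℝ) :
    w = apL (fun m => w (Fin.castAdd k m)) + apR (fun m => w (Fin.natAdd n m)) := by
  funext j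
  refine Fin.addCases (fun m => ?_) (fun m => ?_) j <;>
    simp [apL_castAdd, apL_natAdd, apR_castAdd, apR_natAdd]

lemma apL_eq_sum (v : Fin n → ℝ) :
    apL (k := k) v = ∑ m, v m • apL (Pi.single m 1) := by
  funext j
  rw [Finset.sum_apply]
  refine Fin.addCases (fun m' => ?_) (fun m' => ?_) j
  · simp only [Pi.smul_apply, apL_castAdd, smul_eq_mul, Pi.single_apply]
    rw [Finset.sum_congr rfl (fun m _ => by rw [mul_ite, mul_one, mul_zero])]
    simp [Finset.sum_ite_eq]
  · simp [apL_natAdd]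

lemma apR_eq_sum (w : Fin k → ℝ) :
    apR (n := n) w = ∑ m, w m • apR (Pi.single m 1) := by
  funext j
  rw [Finset.sum_apply]
  refine Fin.addCases (fun m' => ?_) (fun m' => ?_) j
  · simp [apR_castAdd]
  · simp only [Pi.smul_apply, apR_natAdd, smul_eq_mul, Pi.single_apply]
    rw [Finset.sum_congr rfl (fun m _ => by rw [mul_ite, mul_one, mul_zero])]
    simp [Finset.sum_ite_eq]

end append

section cayleyEAux
variable {k : ℕ}

lemma cayleyE_zero' : cayleyE k 0 = 0 := by
  funext j; simp [cayleyE]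

lemma toR_cayleyE_succ (i : Fin k) : toR (cayleyE k i.succ) = Pi.single i 1 := by
  funext j
  simp only [toR, cayleyE, Fin.val_succ, Pi.single_apply]
  by_cases h : j = i
  · simp [h]
  · have : ¬ ((j:ℕ) + 1 = (i:ℕ) + 1) := by
      simp only [Nat.add_right_cancel_iff]
      exact fun hc => h (Fin.ext hc)
    simp [this, h]
    exact fun hc => h (Fin.ext hc)

lemma sum_toR_cayleyE : ∑ i, toR (cayleyE k i) = fun _ => (1:ℝ) := by
  funext j
  rw [Finset.sum_apply]
  have h : ∀ i : Fin (k+1), toR (cayleyE k i) j = if i = ⟨(j:ℕ)+1, by omega⟩ then 1 else 0 := by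
    intro i
    simp only [toR, cayleyE]
    by_cases h : (j:ℕ) + 1 = (i:ℕ)
    · rw [if_pos h, if_pos (Fin.ext h.symm)]; norm_num
    · rw [if_neg h, if_neg (fun hc => h (by rw [hc]))]; norm_num
  rw [Finset.sum_congr rfl (fun i _ => h i)]
  simp [Finset.sum_ite_eq']

end cayleyEAux

lemma zero_mem_interior_of_symm {N : ℕ} {s : Set (Fin N → ℝ)}
    (hconv : Convex ℝ s) (hsymm : ∀ x ∈ s, -x ∈ s)
    (hspan : affineSpan ℝ s = ⊤) : (0 : Fin N → ℝ) ∈ interior s := by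
  obtain ⟨q, hq⟩ := hconv.interior_nonempty_iff_affineSpan_eq_top.2 hspan
  have hneg : -q ∈ interior s := by
    have h1 : interior ((fun x : Fin N → ℝ => -x) '' s) = (fun x => -x) '' interior s :=
      ((Homeomorph.neg (Fin N → ℝ)).image_interior s).symm
    have himg : (fun x : Fin N → ℝ => -x) '' s ⊆ s := by
      rintro y ⟨x, hx, rfl⟩; exact hsymm x hx
    have h2 : -q ∈ interior ((fun x : Fin N → ℝ => -x) '' s) := by
      rw [h1]; exact ⟨q, hq, rfl⟩
    exact interior_mono himg h2
  have := hconv.interior hq hneg (by norm_num : (0:ℝ) ≤ 1/2) (by norm_num : (0:ℝ) ≤ 1/2)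
    (by norm_num)
  simpa using this

lemma mem_interior_of_pm {N : ℕ} {s : Set (Fin N → ℝ)} (hconv : Convex ℝ s)
    (hN : 0 < N)
    (p : Fin N → ℝ) (v : Fin N → (Fin N → ℝ))
    (hspan : Submodule.span ℝ (Set.range v) = ⊤)
    (hmem : ∀ j, p + v j ∈ s ∧ p - v j ∈ s) : p ∈ interior s := by
  set G : Set (Fin N → ℝ) := Set.range v ∪ (-(Set.range v)) with hG
  set K := convexHull ℝ G with hK
  have hKs : (fun y => p + y) '' K ⊆ s := by
    have h1 : (fun y => p + y) '' K = convexHull ℝ ((fun y => p + y) '' G) := by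
      have := (AffineMap.const ℝ (Fin N → ℝ) p +ᵥ AffineMap.id ℝ (Fin N → ℝ)).image_convexHull G
      exact this
    rw [h1]
    apply convexHull_min _ hconv
    rintro y ⟨g, hg, rfl⟩
    rcases hg with ⟨j, rfl⟩ | hg
    · exact (hmem j).1
    · rw [Set.mem_neg] at hg
      obtain ⟨j, hj⟩ := hg
      have : g = -(v j) := by rw [hj, neg_neg]
      rw [this]
      simpa [sub_eq_add_neg] using (hmem j).2
  have hGG : -G ⊆ G := by
    intro y hy
    rw [Set.mem_neg] at hy
    rcases hy with ⟨j, hj⟩ | hy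
    · right; rw [Set.mem_neg]; exact ⟨j, hj⟩
    · rw [Set.mem_neg, neg_neg] at hy; exact Or.inl hy
  have hKsymm : ∀ x ∈ K, -x ∈ K := by
    intro x hx
    have h1 : -x ∈ convexHull ℝ (-G) := by
      rw [convexHull_neg, Set.mem_neg, neg_neg]; exact hx
    exact convexHull_mono hGG h1
  have hKspan : affineSpan ℝ K = ⊤ := by
    rw [hK, affineSpan_convexHull]
    have j0 : Fin N := ⟨0, hN⟩
    have hne : G.Nonempty := ⟨v j0, Or.inl ⟨j0, rfl⟩⟩
    rw [AffineSubspace.affineSpan_eq_top_iff_vectorSpan_eq_top_of_nonempty ℝ (Fin N → ℝ)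
      (Fin N → ℝ) hne]
    rw [eq_top_iff, ← hspan, Submodule.span_le]
    rintro x ⟨j, rfl⟩
    have h2 : v j - (-(v j)) ∈ vectorSpan ℝ G :=
      vsub_mem_vectorSpan ℝ (Or.inl ⟨j, rfl⟩)
        (Or.inr (by rw [Set.mem_neg, neg_neg]; exact ⟨j, rfl⟩))
    have h3 : v j = (2:ℝ)⁻¹ • (v j - -(v j)) := by
      rw [sub_neg_eq_add]; module
    rw [h3]
    exact Submodule.smul_mem _ _ h2
  have h0 : (0 : Fin N → ℝ) ∈ interior K :=
    zero_mem_interior_of_symm (convex_convexHull ℝ G) hKsymm hKspan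
  have hmem0 : p + (0 : Fin N → ℝ) ∈ (fun y => p + y) '' interior K := ⟨0, h0, rfl⟩
  have h2 : (fun y : Fin N → ℝ => p + y) '' interior K = interior ((fun y => p + y) '' K) :=
    ((Homeomorph.addLeft p).image_interior K)
  rw [h2] at hmem0
  have := interior_mono hKs hmem0
  simpa using this

lemma lt_of_mem_interior {r : ℕ} (l : (Fin r → ℝ) →ₗ[ℝ] ℝ) (v : Fin r → ℝ)
    (hv : 0 < l v) {s : Set (Fin r → ℝ)} {c : ℝ} (hs : ∀ y ∈ s, l y ≤ c)
    {p : Fin r → ℝ} (hp : p ∈ interior s) : l p < c := by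
  obtain ⟨ε, hε, hball⟩ := Metric.mem_nhds_iff.1 (mem_interior_iff_mem_nhds.1 hp)
  set η := ε / (2 * (‖v‖ + 1)) with hη
  have hvnorm : (0:ℝ) < ‖v‖ + 1 := by positivity
  have hηpos : 0 < η := by positivity
  have hq : p + η • v ∈ Metric.ball p ε := by
    rw [Metric.mem_ball, dist_eq_norm]
    have h0 : p + η • v - p = η • v := by abel
    rw [h0, norm_smul]
    rw [Real.norm_eq_abs, abs_of_pos hηpos]
    have h1 : η * (‖v‖ + 1) = ε / 2 := by
      rw [hη]; field_simp
    nlinarith [norm_nonneg v]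
  have hle := hs _ (hball hq)
  rw [map_add, map_smul] at hle
  have : 0 < η * l v := by positivity
  simp only [smul_eq_mul] at hle
  linarith

noncomputable def realify {N r : ℕ} (ρ : ZLat N →+ ZLat r) :
    (Fin N → ℝ) →ₗ[ℝ] (Fin r → ℝ) :=
  Matrix.mulVecLin (Matrix.of fun j m => ((ρ (Pi.single m 1)) j : ℝ))

lemma rho_eq_sum {N r : ℕ} (ρ : ZLat N →+ ZLat r) (v : ZLat N) :
    ρ v = ∑ m, v m • ρ (Pi.single m 1) := by
  have h1 : v = ∑ m, v m • (Pi.single m 1 : ZLat N) := by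
    conv_lhs => rw [← Finset.univ_sum_single v]
    congr 1
    funext m
    rw [← Pi.single_smul, smul_eq_mul, mul_one]
  conv_lhs => rw [h1]
  rw [map_sum]
  congr 1
  funext m
  exact map_zsmul ρ _ _

lemma realify_toR {N r : ℕ} (ρ : ZLat N →+ ZLat r) (v : ZLat N) :
    realify ρ (toR v) = toR (ρ v) := by
  funext j
  rw [realify]
  simp only [Matrix.mulVecLin_apply, Matrix.mulVec, dotProduct, Matrix.of_apply]
  rw [rho_eq_sum ρ v]
  simp only [toR, Finset.sum_apply, Pi.smul_apply, smul_eq_mul]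
  push_cast
  exact Finset.sum_congr rfl fun m _ => by ring

lemma realify_surj {N r : ℕ} (ρ : ZLat N →+ ZLat r) (hρ : Function.Surjective ρ) :
    Function.Surjective (realify ρ) := by
  rw [← LinearMap.range_eq_top, eq_top_iff]
  rw [← (Pi.basisFun ℝ (Fin r)).span_eq, Submodule.span_le]
  rintro x ⟨j, rfl⟩
  obtain ⟨w, hw⟩ := hρ (Pi.single j 1)
  refine ⟨toR w, ?_⟩
  rw [realify_toR, hw]
  funext m
  simp [toR, Pi.basisFun_apply, Pi.single_apply]

end Aux

set_option maxHeartbeats 2000000 in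
/-- Let `A_0, …, A_k ⊆ ℤ^n` be full-dimensional configurations such
that `conv(A_0 + ⋯ + A_k)` has an interior lattice point, and suppose a lattice
projection `ρ : ℤ^{n+k} → ℤ^r` maps `A_0 * ⋯ * A_k` onto `Δ_r`. Then `k ≥ r`. -/
theorem k_ge_r_of_projection_onto_simplex {n k r : ℕ}
    (A : Fin (k + 1) → Finset (ZLat n)) (hfull : ∀ i, confDim (A i) = n)
    (hint : HasIntLatPt (∑ i, A i))
    (ρ : ZLat (n + k) →+ ZLat r) (hρ : Function.Surjective ρ)
    (him : (cayley A).image ρ = stdSimplexConfig r) :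
    r ≤ k := by
  rcases Nat.eq_zero_or_pos r with rfl | hr
  · exact Nat.zero_le k
  rcases Nat.eq_zero_or_pos (n + k) with hNz | hN
  · exfalso
    obtain ⟨w, hw⟩ := hρ (Pi.single ⟨0, hr⟩ 1)
    have hw0 : w = 0 := by funext j; exact absurd j.isLt (by omega)
    rw [hw0, map_zero] at hw
    have := congrFun hw ⟨0, hr⟩
    simp [Pi.single_apply] at this
  obtain ⟨x, hx⟩ := hint
  set MS := convexHull ℝ (toR '' ((∑ i, A i : Finset (ZLat n)) : Set (ZLat n))) with hMS
  set C : Set (Fin (n + k) → ℝ) := toR '' ((cayley A : Finset (ZLat (n+k))) : Set (ZLat (n+k)))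
    with hC
  set S := convexHull ℝ C with hSdef
  have hSconv : Convex ℝ S := convex_convexHull ℝ C
  set κ : ℝ := ((k:ℝ) + 1)⁻¹ with hκ
  have hκpos : 0 < κ := by positivity
  have hκ1 : ((k:ℝ) + 1) * κ = 1 := mul_inv_cancel₀ (by positivity)
  set f : (Fin n → ℝ) → (Fin (n + k) → ℝ) :=
    fun u => κ • apL u + κ • apR (fun _ => 1) with hf
  -- decomposition of members of the Minkowski sum
  have hdecomp : ∀ s ∈ (∑ i, A i : Finset (ZLat n)),
      ∃ a : Fin (k+1) → ZLat n, (∀ i, a i ∈ A i) ∧ ∑ i, a i = s := by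
    intro s hs
    have h1 : s ∈ ((∑ i, A i : Finset (ZLat n)) : Set (ZLat n)) := hs
    rw [Finset.coe_sum, Set.mem_fintype_sum] at h1
    obtain ⟨g, hg, hsum⟩ := h1
    exact ⟨g, fun i => hg i, hsum⟩
  -- the points of the Cayley configuration
  have hPmem : ∀ (a : Fin (k+1) → ZLat n), (∀ i, a i ∈ A i) →
      ∀ i, toR (Fin.append (a i) (cayleyE k i)) ∈ C := by
    intro a ha i
    refine ⟨Fin.append (a i) (cayleyE k i), ?_, rfl⟩
    simp only [Finset.mem_coe, cayley, Finset.mem_biUnion, Finset.mem_univ, true_and,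
      Finset.mem_image]
    exact ⟨i, a i, ha i, rfl⟩
  have hsumP : ∀ (a : Fin (k+1) → ZLat n),
      ∑ i, toR (Fin.append (a i) (cayleyE k i))
        = apL (toR (∑ i, a i)) + apR (fun _ => (1:ℝ)) := by
    intro a
    have h1 : ∀ i : Fin (k+1), toR (Fin.append (a i) (cayleyE k i))
        = apL (toR (a i)) + apR (toR (cayleyE k i)) := fun i => by
      rw [toR_append', append_eq_apL_add_apR]
    rw [Finset.sum_congr rfl (fun i _ => h1 i), Finset.sum_add_distrib]
    congr 1
    · rw [toR_sum', apL_finsum]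
    · rw [← apR_finsum, sum_toR_cayleyE]
  -- affine property of f
  have haff : ∀ (a b : ℝ) (u₁ u₂ : Fin n → ℝ), a + b = 1 →
      f (a • u₁ + b • u₂) = a • f u₁ + b • f u₂ := by
    intro a b u₁ u₂ hab
    have hb : b = 1 - a := by linarith
    subst hb
    simp only [hf, apL_add, apL_smul]
    module
  -- generators of the Minkowski sum map into S
  have hgen : ∀ s ∈ (∑ i, A i : Finset (ZLat n)), f (toR s) ∈ S := by
    intro s hs
    obtain ⟨a, ha, hasum⟩ := hdecomp s hs
    have hmem := hSconv.sum_mem (t := (Finset.univ : Finset (Fin (k+1))))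
      (w := fun _ => κ) (z := fun i => toR (Fin.append (a i) (cayleyE k i)))
      (fun i _ => le_of_lt hκpos)
      (by
        rw [Finset.sum_const, Finset.card_univ, Fintype.card_fin, nsmul_eq_mul, hκ]
        push_cast
        field_simp)
      (fun i _ => subset_convexHull ℝ C (hPmem a ha i))
    rw [← Finset.smul_sum, hsumP a, hasum] at hmem
    have : f (toR s) = κ • (apL (toR s) + apR fun _ => (1:ℝ)) := by
      rw [hf]; simp only [smul_add]
    rwa [this]
  -- T lemma
  have hT : ∀ u ∈ MS, f u ∈ S := by
    intro u hu
    have hDconv : Convex ℝ {u : Fin n → ℝ | f u ∈ S} := by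
      intro u₁ h₁ u₂ h₂ a b ha hb hab
      show f _ ∈ S
      rw [haff a b u₁ u₂ hab]
      exact hSconv h₁ h₂ ha hb hab
    refine convexHull_min ?_ hDconv hu
    rintro _ ⟨s, hs, rfl⟩
    exact hgen s hs
  -- interior ball around x
  obtain ⟨ε, hεpos, hball⟩ := Metric.mem_nhds_iff.1 (mem_interior_iff_mem_nhds.1 hx)
  have hxMS : toR x ∈ MS := interior_subset hx
  -- choose a decomposed point σ
  have hne : ∃ s, s ∈ (∑ i, A i : Finset (ZLat n)) := by
    by_contra h
    push_neg at h
    have h0 : ((∑ i, A i : Finset (ZLat n)) : Set (ZLat n)) = ∅ := by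
      simp [Finset.eq_empty_iff_forall_notMem.2 h]
    rw [hMS, h0, Set.image_empty, convexHull_empty] at hxMS
    exact hxMS
  obtain ⟨σ, hσ⟩ := hne
  obtain ⟨b, hbmem, hbσ⟩ := hdecomp σ hσ
  set P : Fin (k+1) → (Fin (n+k) → ℝ) := fun j => toR (Fin.append (b j) (cayleyE k j)) with hP
  have hPc : ∀ j, P j ∈ S := fun j => subset_convexHull ℝ C (hPmem b hbmem j)
  have hPsum : ∑ j, P j = apL (toR σ) + apR (fun _ => (1:ℝ)) := by
    rw [hP, hsumP b, hbσ]
  set p := f (toR x) with hp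
  set p' := f (toR σ) with hp'
  have hp'P : p' = κ • ∑ j, P j := by
    rw [hPsum, hp', hf]; simp only [smul_add]
  set ε₀ : ℝ := κ / 2 with hε₀
  have hε₀pos : 0 < ε₀ := by positivity
  set u : Fin k → (Fin (n+k) → ℝ) := fun i => P i.succ - P 0 with hu
  -- q points
  have hq : ∀ (s : ℝ), s = 1 ∨ s = -1 → ∀ i : Fin k, p' + (s * ε₀) • u i ∈ S := by
    intro s hs i
    set lam : Fin (k+1) → ℝ := fun j =>
      κ + s * ε₀ * ((if j = i.succ then 1 else 0) - (if j = 0 then 1 else 0)) with hlam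
    have hlam_nonneg : ∀ j, 0 ≤ lam j := by
      intro j
      rcases hs with rfl | rfl <;> simp only [hlam, hε₀] <;> split_ifs <;> nlinarith [hκpos]
    have hlam_sum : ∑ j, lam j = 1 := by
      simp only [hlam]
      rw [Finset.sum_add_distrib, ← Finset.mul_sum, Finset.sum_sub_distrib]
      rw [Finset.sum_ite_eq' Finset.univ i.succ (fun _ => (1:ℝ)),
        Finset.sum_ite_eq' Finset.univ 0 (fun _ => (1:ℝ))]
      simp only [Finset.mem_univ, if_pos, sub_self, mul_zero, add_zero]
      rw [Finset.sum_const, Finset.card_univ, Fintype.card_fin, nsmul_eq_mul, hκ]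
      push_cast
      field_simp
    have hmem := hSconv.sum_mem (t := (Finset.univ : Finset (Fin (k+1))))
      (w := lam) (z := P) (fun j _ => hlam_nonneg j) hlam_sum (fun j _ => hPc j)
    have hval : ∑ j, lam j • P j = κ • (∑ j, P j) + (s * ε₀) • (P i.succ - P 0) := by
      have h1 : ∀ j, lam j • P j
          = κ • P j + (s * ε₀) • ((if j = i.succ then (1:ℝ) else 0) • P j
            - (if j = 0 then (1:ℝ) else 0) • P j) := by
        intro j; rw [hlam]; module
      have e1 : ∑ j, ((if j = i.succ then (1:ℝ) else 0) • P j) = P i.succ := by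
        have h2 : ∀ j ∈ (Finset.univ : Finset (Fin (k+1))),
            (if j = i.succ then (1:ℝ) else 0) • P j = if j = i.succ then P j else 0 := by
          intro j _; split_ifs <;> simp
        rw [Finset.sum_congr rfl h2, Finset.sum_ite_eq' Finset.univ i.succ P]
        simp
      have e2 : ∑ j, ((if j = 0 then (1:ℝ) else 0) • P j) = P 0 := by
        have h2 : ∀ j ∈ (Finset.univ : Finset (Fin (k+1))),
            (if j = 0 then (1:ℝ) else 0) • P j = if j = 0 then P j else 0 := by
          intro j _; split_ifs <;> simp
        rw [Finset.sum_congr rfl h2, Finset.sum_ite_eq' Finset.univ 0 P]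
        simp
      calc ∑ j, lam j • P j
          = ∑ j, (κ • P j + (s * ε₀) • ((if j = i.succ then (1:ℝ) else 0) • P j
            - (if j = 0 then (1:ℝ) else 0) • P j)) := Finset.sum_congr rfl (fun j _ => h1 j)
        _ = κ • (∑ j, P j) + (s * ε₀) • (∑ j, ((if j = i.succ then (1:ℝ) else 0) • P j)
            - ∑ j, ((if j = 0 then (1:ℝ) else 0) • P j)) := by
            rw [Finset.sum_add_distrib, ← Finset.smul_sum, ← Finset.smul_sum,
              Finset.sum_sub_distrib]
        _ = κ • (∑ j, P j) + (s * ε₀) • (P i.succ - P 0) := by rw [e1, e2]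
    rw [hval, ← hp'P] at hmem
    exact hmem
  -- the shrink
  set M : ℝ := ‖toR x - toR σ‖ with hM
  have hMnn : 0 ≤ M := norm_nonneg _
  set t : ℝ := min (1/2) (ε / (2 * (M + 1))) with ht
  have ht0 : 0 < t := by
    rw [ht]
    apply lt_min (by norm_num)
    positivity
  have ht2 : t ≤ 1/2 := min_le_left _ _
  have htM : t ≤ ε / (2 * (M + 1)) := min_le_right _ _
  have h1t : (0:ℝ) < 1 - t := by linarith
  set u' : Fin n → ℝ := (1 - t)⁻¹ • (toR x - t • toR σ) with hu'
  have hu'x : (1 - t) • u' + t • toR σ = toR x := by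
    rw [hu', smul_smul, mul_inv_cancel₀ (ne_of_gt h1t), one_smul]
    module
  have hu'ball : u' ∈ Metric.ball (toR x) ε := by
    have hdiff : u' - toR x = ((1 - t)⁻¹ * t) • (toR x - toR σ) := by
      have h4 : (1 - t) • (u' - toR x) = t • (toR x - toR σ) := by
        rw [smul_sub, hu', smul_smul, mul_inv_cancel₀ (ne_of_gt h1t), one_smul]
        module
      have h5 := congrArg (fun w => (1 - t)⁻¹ • w) h4
      simpa [smul_smul, inv_mul_cancel₀ (ne_of_gt h1t)] using h5
    rw [Metric.mem_ball, dist_eq_norm, hdiff, norm_smul, Real.norm_eq_abs, ← hM]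
    have hinv2 : (1 - t)⁻¹ ≤ 2 := by
      rw [← one_div]
      rw [div_le_iff₀ h1t]
      linarith
    have habs : |(1 - t)⁻¹ * t| = (1 - t)⁻¹ * t := by
      apply abs_of_pos
      positivity
    rw [habs]
    have h6 : (1 - t)⁻¹ * t ≤ 2 * t := by
      apply mul_le_mul_of_nonneg_right hinv2 (le_of_lt ht0)
    have h7 : 2 * t * M ≤ 2 * (ε / (2 * (M + 1))) * M := by
      apply mul_le_mul_of_nonneg_right _ hMnn
      linarith
    have h8 : 2 * (ε / (2 * (M + 1))) * M < ε := by
      have hD : (0:ℝ) < 2 * (M + 1) := by positivity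
      rw [show 2 * (ε / (2 * (M + 1))) * M = ε * (2 * M) / (2 * (M + 1)) by ring]
      rw [div_lt_iff₀ hD]
      nlinarith
    calc (1 - t)⁻¹ * t * M ≤ 2 * t * M := mul_le_mul_of_nonneg_right h6 hMnn
    _ < ε := lt_of_le_of_lt h7 h8
  have hfu' : f u' ∈ S := hT u' (hball hu'ball)
  -- p plus/minus the Cayley directions
  have hpm : ∀ (s : ℝ), s = 1 ∨ s = -1 → ∀ i : Fin k, p + (s * (t * ε₀)) • u i ∈ S := by
    intro s hs i
    have hcomb := hSconv hfu' (hq s hs i) (le_of_lt h1t) (le_of_lt ht0) (by ring)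
    have h2 := haff (1 - t) t u' (toR σ) (by ring)
    rw [hu'x] at h2
    have hval : (1 - t) • f u' + t • (p' + (s * ε₀) • u i) = p + (s * (t * ε₀)) • u i := by
      rw [hp, h2, hp']
      module
    rwa [hval] at hcomb
  -- p plus/minus the horizontal directions
  set c₁ : ℝ := κ * (ε / 2) with hc₁
  have hc₁pos : 0 < c₁ := by positivity
  have hfa : ∀ w : Fin n → ℝ, f (toR x + w) = p + κ • apL w := by
    intro w
    rw [hp, hf]
    simp only [apL_add]
    module
  have hhor : ∀ (s : ℝ), s = 1 ∨ s = -1 → ∀ m : Fin n,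
      p + (s * c₁) • apL (Pi.single m 1) ∈ S := by
    intro s hs m
    have hwball : toR x + (s * (ε/2)) • (Pi.single m 1 : Fin n → ℝ) ∈ Metric.ball (toR x) ε := by
      rw [Metric.mem_ball, dist_eq_norm, add_sub_cancel_left, norm_smul, Real.norm_eq_abs]
      have hns : ‖(Pi.single m 1 : Fin n → ℝ)‖ = 1 := by
        rw [Pi.norm_single]; simp
      rw [hns, mul_one]
      rcases hs with rfl | rfl
      · rw [one_mul, abs_of_pos (by positivity)]; linarith
      · rw [neg_one_mul, abs_neg, abs_of_pos (by positivity)]; linarith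
    have hmem := hT _ (hball hwball)
    rw [hfa ((s * (ε/2)) • (Pi.single m 1 : Fin n → ℝ))] at hmem
    have hcol : κ • ((s * (ε/2)) • apL (k := k) (Pi.single m 1 : Fin n → ℝ))
        = (s * c₁) • apL (k := k) (Pi.single m 1 : Fin n → ℝ) := by
      rw [smul_smul, hc₁]; congr 1; ring
    rw [apL_smul, hcol] at hmem
    exact hmem
  -- the perturbation directions
  set c₂ : ℝ := t * ε₀ with hc₂
  have hc₂pos : 0 < c₂ := by positivity
  set v : Fin (n + k) → (Fin (n + k) → ℝ) :=
    Fin.append (fun m => c₁ • apL (Pi.single m 1 : Fin n → ℝ)) (fun i => c₂ • u i) with hv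
  have hvL : ∀ m : Fin n, v (Fin.castAdd k m) = c₁ • apL (Pi.single m 1 : Fin n → ℝ) :=
    fun m => Fin.append_left _ _ m
  have hvR : ∀ i : Fin k, v (Fin.natAdd n i) = c₂ • u i := fun i => Fin.append_right _ _ i
  -- the directions span
  have hspanv : Submodule.span ℝ (Set.range v) = ⊤ := by
    rw [eq_top_iff]
    intro w _
    have hvmem : ∀ j, v j ∈ Submodule.span ℝ (Set.range v) :=
      fun j => Submodule.subset_span ⟨j, rfl⟩
    have hL : ∀ vec : Fin n → ℝ, apL (k := k) vec ∈ Submodule.span ℝ (Set.range v) := by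
      intro vec
      rw [apL_eq_sum]
      refine Submodule.sum_mem _ fun m _ => Submodule.smul_mem _ _ ?_
      have h1 : apL (k := k) (Pi.single m 1 : Fin n → ℝ) = c₁⁻¹ • v (Fin.castAdd k m) := by
        rw [hvL m, smul_smul, inv_mul_cancel₀ (ne_of_gt hc₁pos), one_smul]
      rw [h1]
      exact Submodule.smul_mem _ _ (hvmem _)
    have hU : ∀ i : Fin k, u i ∈ Submodule.span ℝ (Set.range v) := by
      intro i
      have h1 : u i = c₂⁻¹ • v (Fin.natAdd n i) := by
        rw [hvR i, smul_smul, inv_mul_cancel₀ (ne_of_gt hc₂pos), one_smul]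
      rw [h1]
      exact Submodule.smul_mem _ _ (hvmem _)
    have hRsingle : ∀ i : Fin k,
        apR (n := n) (Pi.single i 1 : Fin k → ℝ) ∈ Submodule.span ℝ (Set.range v) := by
      intro i
      have hui : u i = apL (toR (b i.succ) - toR (b 0)) + apR (Pi.single i 1 : Fin k → ℝ) := by
        show P i.succ - P 0 = _
        show toR (Fin.append (b i.succ) (cayleyE k i.succ))
          - toR (Fin.append (b 0) (cayleyE k 0)) = _
        rw [toR_append', toR_append', append_eq_apL_add_apR, append_eq_apL_add_apR,
          toR_cayleyE_succ, cayleyE_zero', toR_zero', apR_zero, apL_sub]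
        abel
      have h2 : apR (n := n) (Pi.single i 1 : Fin k → ℝ)
          = u i - apL (toR (b i.succ) - toR (b 0)) := by
        rw [hui]; abel
      rw [h2]
      exact Submodule.sub_mem _ (hU i) (hL _)
    have hR : ∀ vec : Fin k → ℝ, apR (n := n) vec ∈ Submodule.span ℝ (Set.range v) := by
      intro vec
      rw [apR_eq_sum]
      exact Submodule.sum_mem _ fun m _ => Submodule.smul_mem _ _ (hRsingle m)
    have hw := Submodule.add_mem _ (hL (fun m => w (Fin.castAdd k m)))
      (hR (fun m => w (Fin.natAdd n m)))
    rwa [← split_eq w] at hw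
  -- p is interior
  have hpmem : ∀ j, p + v j ∈ S ∧ p - v j ∈ S := by
    intro j
    refine Fin.addCases (fun m => ?_) (fun i => ?_) j
    · constructor
      · have h := hhor 1 (Or.inl rfl) m
        rw [hvL m]
        simpa using h
      · have h := hhor (-1) (Or.inr rfl) m
        rw [hvL m]
        have hrw : p + ((-1 : ℝ) * c₁) • apL (k := k) (Pi.single m 1 : Fin n → ℝ)
            = p - c₁ • apL (k := k) (Pi.single m 1 : Fin n → ℝ) := by module
        rwa [hrw] at h
    · constructor
      · have h := hpm 1 (Or.inl rfl) i
        rw [hvR i, hc₂]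
        simpa using h
      · have h := hpm (-1) (Or.inr rfl) i
        rw [hvR i, hc₂]
        have hrw : p + ((-1:ℝ) * (t * ε₀)) • u i = p - (t * ε₀) • u i := by module
        rwa [hrw] at h
  have hpint : p ∈ interior S := mem_interior_of_pm hSconv hN p v hspanv hpmem
  -- push forward along ρ
  set Δ : Set (Fin r → ℝ) := toR '' ((stdSimplexConfig r : Finset (ZLat r)) : Set (ZLat r))
    with hΔ
  have hρC : realify ρ '' C = Δ := by
    rw [hC, hΔ, ← Set.image_comp]
    have h1 : (realify ρ) ∘ toR = toR ∘ (ρ : ZLat (n+k) → ZLat r) :=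
      funext fun w => realify_toR ρ w
    rw [h1, Set.image_comp, ← Finset.coe_image, him]
  have himS : realify ρ '' S = convexHull ℝ Δ := by
    rw [hSdef, LinearMap.image_convexHull, hρC]
  have hopen : IsOpenMap (realify ρ) := by
    have hsurj := realify_surj ρ hρ
    have h1 := ContinuousLinearMap.isOpenMap (𝕜 := ℝ)
      (f := LinearMap.toContinuousLinearMap (realify ρ))
      (by rwa [LinearMap.coe_toContinuousLinearMap'])
    rwa [LinearMap.coe_toContinuousLinearMap'] at h1
  have htint : realify ρ p ∈ interior (convexHull ℝ Δ) := by
    have h1 : realify ρ p ∈ realify ρ '' interior S := ⟨p, hpint, rfl⟩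
    have h2 := hopen.image_interior_subset S h1
    rwa [himS] at h2
  -- halfspace bounds for the simplex
  have hgenΔ : ∀ y ∈ Δ, ∃ i : Fin (r+1), y = toR (cayleyE r i) := by
    rintro y ⟨w, hw, rfl⟩
    rw [Finset.mem_coe, stdSimplexConfig, Finset.mem_image] at hw
    obtain ⟨i, _, rfl⟩ := hw
    exact ⟨i, rfl⟩
  have hbound : ∀ (l : (Fin r → ℝ) →ₗ[ℝ] ℝ) (c : ℝ),
      (∀ i : Fin (r+1), l (toR (cayleyE r i)) ≤ c) → ∀ y ∈ convexHull ℝ Δ, l y ≤ c := by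
    intro l c hgen y hy
    refine convexHull_min ?_ (convex_halfSpace_le l.isLinear c) hy
    intro w hwΔ
    obtain ⟨i, rfl⟩ := hgenΔ w hwΔ
    exact hgen i
  -- strict positivity of coordinates
  have hpos : ∀ j : Fin r, 0 < realify ρ p j := by
    intro j
    have hlv : (0:ℝ) < (-(LinearMap.proj j : (Fin r → ℝ) →ₗ[ℝ] ℝ))
        (-(Pi.single j 1 : Fin r → ℝ)) := by
      simp [LinearMap.proj_apply]
    have hb : ∀ y ∈ convexHull ℝ Δ, (-(LinearMap.proj j : (Fin r → ℝ) →ₗ[ℝ] ℝ)) y ≤ 0 := by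
      apply hbound
      intro i
      simp only [LinearMap.neg_apply, LinearMap.proj_apply]
      have h0 : (0:ℝ) ≤ toR (cayleyE r i) j := by
        simp only [toR, cayleyE]
        split_ifs <;> norm_num
      linarith
    have hlt := lt_of_mem_interior _ _ hlv hb htint
    simp only [LinearMap.neg_apply, LinearMap.proj_apply, neg_lt, neg_zero] at hlt
    exact hlt
  -- the sum of coordinates is < 1
  have hsumlt : ∑ j, realify ρ p j < 1 := by
    set lsum : (Fin r → ℝ) →ₗ[ℝ] ℝ := ∑ j, LinearMap.proj j with hlsum
    have hlsum_apply : ∀ y : Fin r → ℝ, lsum y = ∑ j, y j := by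
      intro y
      rw [hlsum]
      simp [LinearMap.sum_apply, LinearMap.proj_apply]
    have hlv : (0:ℝ) < lsum (fun _ => 1) := by
      rw [hlsum_apply]
      rw [Finset.sum_const, Finset.card_univ, Fintype.card_fin, nsmul_eq_mul, mul_one]
      exact_mod_cast hr
    have hb : ∀ y ∈ convexHull ℝ Δ, lsum y ≤ 1 := by
      apply hbound
      intro i
      rw [hlsum_apply]
      refine Fin.cases ?_ ?_ i
      · rw [cayleyE_zero', toR_zero']
        simp
      · intro m
        rw [toR_cayleyE_succ]
        simp [Pi.single_apply, Finset.sum_ite_eq']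
    have hlt := lt_of_mem_interior lsum (fun _ => 1) hlv hb htint
    rwa [hlsum_apply] at hlt
  -- the integer point and the final count
  set z : ZLat (n + k) := Fin.append x (fun _ => 1) with hzdef
  have htoRz : toR z = apL (toR x) + apR (fun _ => (1:ℝ)) := by
    rw [hzdef, toR_append']
    have h1 : toR (fun _ => (1:ℤ) : ZLat k) = fun _ => (1:ℝ) := by funext j; simp [toR]
    rw [h1, append_eq_apL_add_apR]
  have hzp : toR z = ((k:ℝ) + 1) • p := by
    rw [htoRz]
    simp only [hp, hf]
    rw [smul_add, smul_smul, smul_smul, hκ1, one_smul, one_smul]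
  have hyR : toR (ρ z) = ((k:ℝ) + 1) • realify ρ p := by
    rw [← realify_toR, hzp, map_smul]
  have hyj : ∀ j, ((ρ z) j : ℝ) = ((k:ℝ) + 1) * realify ρ p j := by
    intro j
    have h1 := congrFun hyR j
    simpa [toR] using h1
  have h1le : ∀ j, (1:ℤ) ≤ (ρ z) j := by
    intro j
    have h0 : (0:ℝ) < ((ρ z) j : ℝ) := by
      rw [hyj j]
      exact mul_pos (by positivity) (hpos j)
    have h2 : (0:ℤ) < (ρ z) j := by exact_mod_cast h0
    omega
  have hsle : ∑ j, (ρ z) j ≤ (k:ℤ) := by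
    have hRlt : ((∑ j, (ρ z) j : ℤ) : ℝ) < (k:ℝ) + 1 := by
      push_cast
      rw [Finset.sum_congr rfl (fun j _ => hyj j), ← Finset.mul_sum]
      calc ((k:ℝ)+1) * ∑ j, realify ρ p j < ((k:ℝ)+1) * 1 :=
          mul_lt_mul_of_pos_left hsumlt (by positivity)
        _ = (k:ℝ) + 1 := mul_one _
    have h2 : (∑ j, (ρ z) j) < (k:ℤ) + 1 := by exact_mod_cast hRlt
    omega
  have hfin : (r:ℤ) ≤ (k:ℤ) := by
    calc (r:ℤ) = ∑ _j : Fin r, (1:ℤ) := by simp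
    _ ≤ ∑ j, (ρ z) j := Finset.sum_le_sum (fun j _ => h1le j)
    _ ≤ (k:ℤ) := hsle
  exact_mod_cast hfin
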